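/- With the stabilized length $\ell^{st}(w t_\lambda) = \ell(w) - 2\langle \rho^\vee, \lambda \rangle$ on $W^a$, define $x \leqslant^{st} y$ if there exist roots $\beta_1, \ldots, \beta_k$ of the affine root system with $x = s_{\beta_1} \cdots s_{\beta_k} y$ and $\ell^{st}(s_{\beta_i} \cdots s_{\beta_k} y) < \ell^{st}(s_{\beta_{i+1}} \cdots s_{\beta_k} y)$ for all $i$. Then $\leqslant^{st}$ is a partial order on $W^a$, and for every $\mu \in \Lambda_0$ the map $x \mapsto x t_\mu$ is an automorphism of the poset $(W^a, \leqslant^{st})$. -/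

import Mathlib

/-- Model the affine Weyl group `W^a = W ⋉ Λ₀` by pairs `(w, λ)` with
multiplication `(w, λ) * (v, μ) = (wv, v⁻¹λ + μ)` (so `w t_λ · v t_μ = wv t_{v⁻¹λ + μ}`);
`t_μ = (1, μ)`.  The reflections of `W^a` are the elements `s_α t_{kα}` for `α ∈ Φ`
(the positive finite roots) and `k ∈ ℤ`.  With the stabilized length
`ℓ^{st}(w t_λ) = ℓ(w) - 2⟨ρ^∨, λ⟩`, define `x ≤st y` iff there is a chain of roots
`β₁, …, β_r` with `x = s_{β₁} ⋯ s_{β_r} y` and each left multiplication by a reflection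
strictly decreasing `ℓ^{st}`.  Then `≤st` is a partial order on `W^a`, and for every
`μ ∈ Λ₀` the map `x ↦ x t_μ` is an automorphism of the poset `(W^a, ≤st)`. -/
theorem stmt6 {W Λ : Type*} [Group W] [AddCommGroup Λ] [DistribMulAction W Λ]
    (Φ : Finset Λ) (s : Λ → W) (lenW : W → ℕ) (rhov : Λ →+ ℤ) :
    -- multiplication in `W^a = W ⋉ Λ₀`
    let wamul : W × Λ → W × Λ → W × Λ := fun p q => (p.1 * q.1, q.1⁻¹ • p.2 + q.2)
    -- stabilized length `ℓ^{st}(w t_λ) = ℓ(w) - 2⟨ρ^∨, λ⟩`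
    let ℓst : W × Λ → ℤ := fun p => (lenW p.1 : ℤ) - 2 * rhov p.2
    -- the reflections `s_α t_{kα}` of `W^a`
    let Refl : Set (W × Λ) := {x | ∃ α ∈ Φ, ∃ k : ℤ, x = (s α, k • α)}
    -- one step: left multiplication by a reflection strictly decreasing `ℓ^{st}`
    let step : W × Λ → W × Λ → Prop :=
      fun x y => (∃ r ∈ Refl, x = wamul r y) ∧ ℓst x < ℓst y
    -- `x ≤st y`
    let lest : W × Λ → W × Λ → Prop := Relation.ReflTransGen step
    -- `≤st` is a partial order ...
    (Reflexive lest ∧ Transitive lest ∧ AntiSymmetric lest) ∧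
    -- ... and each right translation `x ↦ x t_μ` is a poset automorphism.
    (∀ μ : Λ, ∀ x y : W × Λ,
      lest x y ↔ lest (wamul x (1, μ)) (wamul y (1, μ))) := by

  intro wamul ℓst Refl step lest
  have hmono : ∀ {x y : W × Λ}, lest x y → x = y ∨ ℓst x < ℓst y := by
    intro x y h
    induction h with
    | refl => exact Or.inl rfl
    | tail hab hbc ih =>
      rcases ih with rfl | hlt
      · exact Or.inr hbc.2
      · exact Or.inr (hlt.trans hbc.2)
  have hshift : ∀ (μ : Λ) (x : W × Λ), ℓst (wamul x (1, μ)) = ℓst x - 2 * rhov μ := by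
    intro μ x
    simp only [wamul, ℓst, inv_one, one_smul, map_add, mul_one]
    ring
  have hassoc : ∀ (r x : W × Λ) (μ : Λ),
      wamul (wamul r x) (1, μ) = wamul r (wamul x (1, μ)) := by
    intro r x μ
    simp only [wamul, mul_one, inv_one, one_smul, smul_add]
    exact Prod.ext rfl (add_assoc _ _ _)
  have hstep : ∀ (μ : Λ) {x y : W × Λ}, step x y →
      step (wamul x (1, μ)) (wamul y (1, μ)) := by
    intro μ x y ⟨⟨r, hr, hx⟩, hlt⟩
    constructor
    · exact ⟨r, hr, by rw [hx, hassoc]⟩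
    · rw [hshift, hshift]; omega
  have hfwd : ∀ (μ : Λ) {x y : W × Λ}, lest x y →
      lest (wamul x (1, μ)) (wamul y (1, μ)) := by
    intro μ x y h
    induction h with
    | refl => exact Relation.ReflTransGen.refl
    | tail hab hbc ih => exact ih.tail (hstep μ hbc)
  have hcancel : ∀ (μ : Λ) (x : W × Λ), wamul (wamul x (1, μ)) (1, -μ) = x := by
    intro μ x
    simp [wamul]
  refine ⟨⟨fun x => Relation.ReflTransGen.refl, fun _ _ _ h h' => h.trans h', ?_⟩, ?_⟩
  · intro x y h1 h2
    rcases hmono h1 with rfl | hlt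
    · rfl
    · rcases hmono h2 with rfl | hlt'
      · rfl
      · omega
  · intro μ x y
    refine ⟨hfwd μ, fun h => ?_⟩
    have := hfwd (-μ) h
    rwa [hcancel, hcancel] at this
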